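/- If a sequence of positive reals μ_n satisfies n·μ_n → c as n → ∞ for some c ≥ 0, then (1/log N) Σ_{n=1}^N μ_n → c as N → ∞. -/

import Mathlib

open Filter Finset Asymptotics Real

noncomputable def Gaux : ℕ → ℝ := fun n => ∑ i ∈ Finset.range n, ((i : ℝ))⁻¹

lemma Gaux_succ_eq_harmonic (N : ℕ) : Gaux (N + 1) = (harmonic N : ℝ) := by
  rw [Gaux, Finset.sum_range_succ']
  push_cast [harmonic]
  simp

lemma Gaux_sub_log : Filter.Tendsto (fun N : ℕ => Gaux (N + 1) - Real.log N)
    Filter.atTop (nhds Real.eulerMascheroniConstant) := by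
  simp only [Gaux_succ_eq_harmonic]
  exact Real.tendsto_harmonic_sub_log

lemma log_nat_atTop : Filter.Tendsto (fun N : ℕ => Real.log N) Filter.atTop Filter.atTop :=
  Real.tendsto_log_atTop.comp tendsto_natCast_atTop_atTop

lemma Gaux_atTop : Filter.Tendsto Gaux Filter.atTop Filter.atTop := by
  have h1 : Filter.Tendsto (fun N : ℕ => Gaux (N + 1)) Filter.atTop Filter.atTop := by
    have := Gaux_sub_log.add_atTop log_nat_atTop
    simpa using this
  have h2 : Filter.Tendsto (fun N : ℕ => Gaux (N - 1 + 1)) Filter.atTop Filter.atTop :=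
    h1.comp (tendsto_sub_atTop_nat 1)
  apply h2.congr'
  filter_upwards [Filter.eventually_ge_atTop 1] with N hN
  congr 1
  omega

lemma Gaux_div_log : Filter.Tendsto (fun N : ℕ => Gaux (N + 1) / Real.log N)
    Filter.atTop (nhds 1) := by
  have h1 : Filter.Tendsto (fun N : ℕ => (Gaux (N + 1) - Real.log N) / Real.log N)
      Filter.atTop (nhds 0) := Gaux_sub_log.div_atTop log_nat_atTop
  have := h1.add_const 1
  rw [zero_add] at this
  apply this.congr'
  filter_upwards [Filter.eventually_gt_atTop 1] with N hN
  have hlog : Real.log N ≠ 0 := by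
    have : (1:ℝ) < N := by exact_mod_cast hN
    exact ne_of_gt (Real.log_pos this)
  field_simp
  ring

theorem stmt_16 (μ : ℕ → ℝ) (hpos : ∀ n, 0 < μ n) (c : ℝ) (hc : 0 ≤ c)
    (h : Filter.Tendsto (fun n : ℕ => (n : ℝ) * μ n) Filter.atTop (nhds c)) :
    Filter.Tendsto (fun N : ℕ => (∑ n ∈ Finset.Icc 1 N, μ n) / Real.log N)
      Filter.atTop (nhds c) := by
  set f : ℕ → ℝ := fun n => μ n - c * ((n : ℝ))⁻¹ with hf
  -- f =o[atTop] (·)⁻¹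
  have hfo : f =o[atTop] fun n : ℕ => ((n : ℝ))⁻¹ := by
    rw [isLittleO_iff_tendsto']
    · have : Filter.Tendsto (fun n : ℕ => (n : ℝ) * μ n - c) Filter.atTop (nhds 0) := by
        simpa using h.sub_const c
      apply this.congr'
      filter_upwards [Filter.eventually_ge_atTop 1] with n hn
      have hn0 : (n : ℝ) ≠ 0 := Nat.cast_ne_zero.2 (by omega)
      simp only [hf]
      rw [div_inv_eq_mul, sub_mul, mul_assoc, inv_mul_cancel₀ hn0, mul_one, mul_comm]
    · filter_upwards [Filter.eventually_ge_atTop 1] with n hn h0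
      exact absurd h0 (inv_ne_zero (Nat.cast_ne_zero.2 (by omega)))
  have hsum : (fun n => ∑ i ∈ Finset.range n, f i) =o[atTop] Gaux :=
    hfo.sum_range (fun i => by positivity) Gaux_atTop
  have hGpos : ∀ᶠ N : ℕ in atTop, 0 < Gaux (N + 1) := by
    filter_upwards [Filter.eventually_ge_atTop 1] with N hN
    rw [Gaux_succ_eq_harmonic]
    exact_mod_cast harmonic_pos (by omega)
  -- (∑ f over range (N+1)) / Gaux (N+1) → 0
  have hratio : Filter.Tendsto (fun N : ℕ => (∑ i ∈ Finset.range (N + 1), f i) / Gaux (N + 1))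
      Filter.atTop (nhds 0) := by
    have := (isLittleO_iff_tendsto' (by
      filter_upwards [Gaux_atTop.eventually_gt_atTop 0] with n hn h0
      exact absurd h0 hn.ne')).1 hsum
    exact this.comp (tendsto_add_atTop_nat 1)
  -- A: sum f / log → 0
  have hA : Filter.Tendsto (fun N : ℕ => (∑ i ∈ Finset.range (N + 1), f i) / Real.log N)
      Filter.atTop (nhds 0) := by
    have := hratio.mul Gaux_div_log
    rw [zero_mul] at this
    apply this.congr'
    filter_upwards [hGpos] with N hN
    field_simp
  -- B: c * Gaux (N+1) / log N → c
  have hB : Filter.Tendsto (fun N : ℕ => c * (Gaux (N + 1) / Real.log N))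
      Filter.atTop (nhds c) := by
    have := Gaux_div_log.const_mul c
    simpa using this
  -- C: μ 0 / log N → 0
  have hC : Filter.Tendsto (fun N : ℕ => μ 0 / Real.log N) Filter.atTop (nhds 0) :=
    tendsto_const_nhds.div_atTop log_nat_atTop
  have key := (hA.add hB).sub hC
  rw [zero_add, sub_zero] at key
  apply key.congr'
  filter_upwards [Filter.eventually_gt_atTop 1] with N hN
  have hlog : Real.log N ≠ 0 := ne_of_gt (Real.log_pos (by exact_mod_cast hN))
  have hsplit : ∑ n ∈ Finset.Icc 1 N, μ n
      = (∑ i ∈ Finset.range (N + 1), f i) + c * Gaux (N + 1) - μ 0 := by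
    have h1 : ∑ i ∈ Finset.range (N + 1), μ i = μ 0 + ∑ n ∈ Finset.Icc 1 N, μ n := by
      rw [Finset.sum_range_succ']
      have : ∑ n ∈ Finset.Icc 1 N, μ n = ∑ k ∈ Finset.range N, μ (1 + k) := by
        rw [← Finset.Ico_add_one_right_eq_Icc, Finset.sum_Ico_eq_sum_range]
        simp
      rw [this]
      simp only [Nat.add_comm 1]
      ring
    have h2 : ∑ i ∈ Finset.range (N + 1), f i
        = (∑ i ∈ Finset.range (N + 1), μ i) - c * Gaux (N + 1) := by
      simp [hf, Finset.sum_sub_distrib, Gaux, Finset.mul_sum]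
    rw [h1] at h2
    linarith
  rw [hsplit]
  field_simp [Gaux]
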